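/- Define the entire function G(z) = G(0) − ∫_0^z sin²(πs)/(π²·s·(s+1)²) ds, where G(0) = −∫_{−∞}^{0} sin²(πu)/(π²·u·(u+1)²) du, the integral from 0 to z is along the straight segment, and the integrand extends to an entire function of s. Then there exists a constant C > 0 such that |G(z)| ≤ C·|z|·e^{2π·|Im z|} for all z ∈ ℂ with |z| ≥ 1; in particular G has exponential type at most 2π. -/

import Mathlib

open MeasureTheory Real Set

lemma abs_sin_le (w : ℂ) : ‖Complex.sin w‖ ≤ Real.exp |w.im| := by
  rw [Complex.sin]
  calc ‖(Complex.exp (-w * Complex.I) - Complex.exp (w * Complex.I)) * Complex.I / 2‖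
      ≤ (‖Complex.exp (-w * Complex.I)‖ + ‖Complex.exp (w * Complex.I)‖) / 2 := by
        rw [norm_div, norm_mul, Complex.norm_I, mul_one]
        gcongr
        · exact norm_sub_le _ _
        · simp
      _ ≤ Real.exp |w.im| := by
        rw [Complex.norm_exp, Complex.norm_exp]
        have h1 : (-w * Complex.I).re = w.im := by simp
        have h2 : (w * Complex.I).re = -w.im := by simp
        rw [h1, h2]
        have := abs_le.mp (le_refl |w.im|)
        nlinarith [Real.exp_le_exp.mpr (le_abs_self w.im),
          Real.exp_le_exp.mpr (neg_le_abs w.im)]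

/-- `F` has exponential type at most `τ`. -/
def HasExpTypeLE (τ : ℝ) (F : ℂ → ℂ) : Prop :=
  ∀ ε > 0, ∃ C > 0, ∀ z : ℂ, ‖F z‖ ≤ C * Real.exp ((τ + ε) * ‖z‖)

theorem stmt_9
    -- `g` is the entire extension of `s ↦ sin²(πs)/(π²·s·(s+1)²)`
    (g : ℂ → ℂ) (hg : Differentiable ℂ g)
    (hgeq : ∀ s : ℂ, s ≠ 0 → s ≠ -1 →
      g s = Complex.sin ((π : ℂ) * s) ^ 2 / ((π : ℂ) ^ 2 * s * (s + 1) ^ 2))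
    -- `G z = G(0) - ∫_{[0,z]} g`, where `G(0) = -∫_{-∞}^0 g(u) du` and the segment
    -- integral is parametrized by `t ↦ t·z`
    (G : ℂ → ℂ)
    (hG : ∀ z : ℂ, G z =
      (-∫ u in Iic (0 : ℝ), g (u : ℂ)) - ∫ t in (0:ℝ)..1, z * g ((t : ℂ) * z)) :
    (∃ C > 0, ∀ z : ℂ, 1 ≤ ‖z‖ →
      ‖G z‖ ≤ C * ‖z‖ * Real.exp (2 * π * |z.im|)) ∧
      HasExpTypeLE (2 * π) G := by
  obtain ⟨M₁, hM₁⟩ := (isCompact_closedBall (0:ℂ) 2).exists_bound_of_continuousOn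
    hg.continuous.continuousOn
  set M : ℝ := max M₁ 1 with hMdef
  have hM1 : (1:ℝ) ≤ M := le_max_right _ _
  have hMpos : 0 < M := lt_of_lt_of_le one_pos hM1
  -- global bound on g
  have hbound : ∀ w : ℂ, ‖g w‖ ≤ M * Real.exp (2 * π * |w.im|) := by
    intro w
    have hexp1 : (1:ℝ) ≤ Real.exp (2 * π * |w.im|) := by
      apply Real.one_le_exp
      positivity
    by_cases hw : ‖w‖ ≤ 2
    · have := hM₁ w (by simpa [Complex.dist_eq] using hw)
      calc ‖g w‖ ≤ M₁ := this
        _ ≤ M := le_max_left _ _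
        _ = M * 1 := (mul_one M).symm
        _ ≤ M * Real.exp (2 * π * |w.im|) := by gcongr
    · push_neg at hw
      have hw0 : w ≠ 0 := by
        intro h; rw [h] at hw; simp at hw; linarith
      have hw1 : w ≠ -1 := by
        intro h; rw [h] at hw; simp at hw
      rw [hgeq w hw0 hw1]
      rw [norm_div, norm_mul, norm_mul, norm_pow, norm_pow, norm_pow]
      have hsin : ‖Complex.sin ((π:ℂ) * w)‖ ^ 2 ≤ Real.exp (2 * π * |w.im|) := by
        have h1 : ‖Complex.sin ((π:ℂ) * w)‖ ≤ Real.exp (π * |w.im|) := by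
          have := abs_sin_le ((π:ℂ) * w)
          have him : ((π:ℂ) * w).im = π * w.im := by simp
          rw [him] at this
          rwa [abs_mul, abs_of_pos Real.pi_pos] at this
        calc ‖Complex.sin ((π:ℂ) * w)‖ ^ 2
            ≤ Real.exp (π * |w.im|) ^ 2 := by
              apply pow_le_pow_left₀ (norm_nonneg _) h1
          _ = Real.exp (2 * π * |w.im|) := by
              rw [sq, ← Real.exp_add]
              ring_nf
      have habsπ : ‖(π:ℂ)‖ = π := by
        rw [Complex.norm_real, Real.norm_of_nonneg Real.pi_pos.le]
      have hw1abs : (1:ℝ) ≤ ‖w + 1‖ := by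
        have h := norm_add_le (w + 1) (-1)
        simp only [add_neg_cancel_right] at h
        have : ‖w‖ ≤ ‖w + 1‖ + 1 := by simpa using h
        linarith
      have hden : (1:ℝ) ≤ ‖(π:ℂ)‖ ^ 2 * ‖w‖ * ‖w + 1‖ ^ 2 := by
        rw [habsπ]
        have hπ2 : (1:ℝ) ≤ π ^ 2 := by nlinarith [Real.pi_gt_three]
        have e1 : (1:ℝ) ≤ ‖w + 1‖ ^ 2 := by nlinarith
        have e2 : (2:ℝ) ≤ π ^ 2 * ‖w‖ := by nlinarith
        nlinarith [mul_le_mul e2 e1 one_pos.le (by positivity : (0:ℝ) ≤ π ^ 2 * ‖w‖)]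
      calc ‖Complex.sin ((π:ℂ) * w)‖ ^ 2 /
            (‖(π:ℂ)‖ ^ 2 * ‖w‖ * ‖w + 1‖ ^ 2)
          ≤ Real.exp (2 * π * |w.im|) / 1 := by
            apply div_le_div₀ (Real.exp_nonneg _) hsin one_pos hden
        _ = Real.exp (2 * π * |w.im|) := by rw [div_one]
        _ = 1 * Real.exp (2 * π * |w.im|) := (one_mul _).symm
        _ ≤ M * Real.exp (2 * π * |w.im|) := by gcongr
  set K : ℝ := ‖∫ u in Iic (0 : ℝ), g (u : ℂ)‖ with hKdef
  have hK0 : 0 ≤ K := norm_nonneg _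
  -- master bound
  have master : ∀ z : ℂ, ‖G z‖ ≤ K + M * ‖z‖ * Real.exp (2 * π * |z.im|) := by
    intro z
    rw [hG z]
    have hint : ‖∫ t in (0:ℝ)..1, z * g ((t : ℂ) * z)‖ ≤
        M * ‖z‖ * Real.exp (2 * π * |z.im|) := by
      have h := intervalIntegral.norm_integral_le_of_norm_le_const
        (C := ‖z‖ * (M * Real.exp (2 * π * |z.im|)))
        (f := fun t : ℝ => z * g ((t : ℂ) * z)) (a := 0) (b := 1) ?_
      · simp only [sub_zero, abs_one, mul_one] at h
        calc ‖∫ t in (0:ℝ)..1, z * g ((t : ℂ) * z)‖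
            ≤ ‖z‖ * (M * Real.exp (2 * π * |z.im|)) := h
          _ = M * ‖z‖ * Real.exp (2 * π * |z.im|) := by ring
      · intro t ht
        rw [Set.uIoc_of_le (by norm_num : (0:ℝ) ≤ 1)] at ht
        obtain ⟨ht0, ht1⟩ := ht
        rw [norm_mul]
        have him : ((t : ℂ) * z).im = t * z.im := by simp
        have h2 : |((t : ℂ) * z).im| ≤ |z.im| := by
          rw [him, abs_mul, abs_of_pos ht0]
          calc t * |z.im| ≤ 1 * |z.im| := by gcongr
            _ = |z.im| := one_mul _
        have := hbound ((t : ℂ) * z)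
        have h3 : Real.exp (2 * π * |((t:ℂ) * z).im|) ≤ Real.exp (2 * π * |z.im|) := by
          apply Real.exp_le_exp.mpr
          have : 0 ≤ 2 * π := by positivity
          exact mul_le_mul_of_nonneg_left h2 this
        calc ‖z‖ * ‖g ((t:ℂ) * z)‖
            ≤ ‖z‖ * (M * Real.exp (2 * π * |((t:ℂ) * z).im|)) := by
              gcongr
          _ ≤ ‖z‖ * (M * Real.exp (2 * π * |z.im|)) := by
              gcongr
    calc ‖(-∫ u in Iic (0 : ℝ), g (u : ℂ)) - ∫ t in (0:ℝ)..1, z * g ((t : ℂ) * z)‖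
        ≤ ‖-∫ u in Iic (0 : ℝ), g (u : ℂ)‖ +
          ‖∫ t in (0:ℝ)..1, z * g ((t : ℂ) * z)‖ := norm_sub_le _ _
      _ ≤ K + M * ‖z‖ * Real.exp (2 * π * |z.im|) := by
          rw [norm_neg]
          exact add_le_add le_rfl hint
  -- first part
  have part1 : ∀ z : ℂ, 1 ≤ ‖z‖ →
      ‖G z‖ ≤ (K + M) * ‖z‖ * Real.exp (2 * π * |z.im|) := by
    intro z hz
    have hexp1 : (1:ℝ) ≤ Real.exp (2 * π * |z.im|) := Real.one_le_exp (by positivity)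
    calc ‖G z‖ ≤ K + M * ‖z‖ * Real.exp (2 * π * |z.im|) := master z
      _ ≤ K * (‖z‖ * Real.exp (2 * π * |z.im|)) +
          M * ‖z‖ * Real.exp (2 * π * |z.im|) := by
          nlinarith [mul_le_mul hz hexp1 one_pos.le (norm_nonneg z)]
      _ = (K + M) * ‖z‖ * Real.exp (2 * π * |z.im|) := by ring
  constructor
  · exact ⟨K + M, by linarith, part1⟩
  · intro ε hε
    refine ⟨(K + M) / ε + K + M * Real.exp (2 * π) + 1, by positivity, fun z => ?_⟩
    have him : |z.im| ≤ ‖z‖ := Complex.abs_im_le_norm z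
    have hexpA : Real.exp (2 * π * |z.im|) ≤ Real.exp (2 * π * ‖z‖) := by
      apply Real.exp_le_exp.mpr
      have : (0:ℝ) ≤ 2 * π := by positivity
      exact mul_le_mul_of_nonneg_left him this
    by_cases hz : 1 ≤ ‖z‖
    · have h1 := part1 z hz
      have h2 : ‖z‖ ≤ Real.exp (ε * ‖z‖) / ε := by
        rw [le_div_iff₀ hε]
        calc ‖z‖ * ε = ε * ‖z‖ := by ring
          _ ≤ Real.exp (ε * ‖z‖) :=
            le_trans (by linarith [Real.add_one_le_exp (ε * ‖z‖)])
              le_rfl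
      calc ‖G z‖
          ≤ (K + M) * ‖z‖ * Real.exp (2 * π * |z.im|) := h1
        _ ≤ (K + M) * (Real.exp (ε * ‖z‖) / ε) * Real.exp (2 * π * ‖z‖) := by
            gcongr
        _ = (K + M) / ε * (Real.exp (ε * ‖z‖) * Real.exp (2 * π * ‖z‖)) := by
            ring
        _ = (K + M) / ε * Real.exp ((2 * π + ε) * ‖z‖) := by
            rw [← Real.exp_add]; ring_nf
        _ ≤ ((K + M) / ε + K + M * Real.exp (2 * π) + 1) *
            Real.exp ((2 * π + ε) * ‖z‖) := by
            have : (0:ℝ) ≤ K + M * Real.exp (2 * π) + 1 := by positivity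
            nlinarith [Real.exp_pos ((2 * π + ε) * ‖z‖)]
    · push_neg at hz
      have hexpB : Real.exp (2 * π * |z.im|) ≤ Real.exp (2 * π) := by
        apply Real.exp_le_exp.mpr
        nlinarith [Real.pi_pos, him.trans hz.le]
      have hexp1 : (1:ℝ) ≤ Real.exp ((2 * π + ε) * ‖z‖) :=
        Real.one_le_exp (by positivity)
      calc ‖G z‖
          ≤ K + M * ‖z‖ * Real.exp (2 * π * |z.im|) := master z
        _ ≤ K + M * Real.exp (2 * π) := by
            nlinarith [norm_nonneg z, Real.exp_pos (2 * π * |z.im|),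
              mul_le_mul hz.le hexpB (Real.exp_nonneg _) one_pos.le]
        _ = (K + M * Real.exp (2 * π)) * 1 := (mul_one _).symm
        _ ≤ ((K + M) / ε + K + M * Real.exp (2 * π) + 1) *
            Real.exp ((2 * π + ε) * ‖z‖) := by
            apply mul_le_mul _ hexp1 one_pos.le (by positivity)
            have : 0 ≤ (K + M) / ε := by positivity
            linarith
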